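/- Let X be a connected topological space and let Ω₁, Ω₂ be disjoint non-empty open sets with closure(Ω₁) ∪ closure(Ω₂) = X, Ω_i = interior(closure(Ω_i)), and each Ω_i connected. If additionally X is simply connected and locally path-connected metric, then Σ = ∂Ω₁ = ∂Ω₂ is connected. -/

import Mathlib

open Set


noncomputable section
namespace TwoCellAux

variable {X : Type*} [TopologicalSpace X]


lemma circle_ne_neg_self (z : Circle) : (z : ℂ) ≠ -(z : ℂ) := by
  intro h2
  have h0 : (z : ℂ) = 0 := by linear_combination h2 / 2
  have := Circle.norm_coe z
  rw [h0] at this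
  simp at this

lemma mem_slitPlane_of_ne_neg_one {z : Circle} (hz : (z : ℂ) ≠ -1) :
    (z : ℂ) ∈ Complex.slitPlane := by
  rw [Complex.mem_slitPlane_iff]
  by_contra h
  push_neg at h
  obtain ⟨h1, h2⟩ := h
  have habs := Circle.norm_coe z
  have hsq : (z : ℂ).re * (z : ℂ).re + (z : ℂ).im * (z : ℂ).im = 1 := by
    have h3 := Complex.sq_norm (z : ℂ)
    rw [habs, Complex.normSq_apply] at h3
    nlinarith
  have hre : (z : ℂ).re = -1 := by nlinarith
  exact hz (Complex.ext (by simpa using hre) (by simpa using h2))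

lemma div_ne_neg_one {u v : Circle} (h : (u : ℂ) ≠ -(v : ℂ)) :
    ((u / v : Circle) : ℂ) ≠ -1 := by
  intro hc
  apply h
  rw [Circle.coe_div] at hc
  field_simp at hc
  rw [hc]

/-- Local step: if `u` is pointwise never antipodal to `v` and `v` lifts, then `u` lifts. -/
lemma step_lift {Y : Type*} [TopologicalSpace Y] {u v : Y → Circle}
    (hu : Continuous u) (hv : Continuous v) (h : ∀ y, (u y : ℂ) ≠ -(v y : ℂ))
    {g : Y → ℝ} (hg : Continuous g) (hgv : ∀ y, Circle.exp (g y) = v y) :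
    ∃ g' : Y → ℝ, Continuous g' ∧ ∀ y, Circle.exp (g' y) = u y := by
  refine ⟨fun y => g y + Complex.arg ((u y / v y : Circle) : ℂ), ?_, ?_⟩
  · apply hg.add
    rw [continuous_iff_continuousAt]
    intro y
    have hmem : ((u y / v y : Circle) : ℂ) ∈ Complex.slitPlane :=
      mem_slitPlane_of_ne_neg_one (div_ne_neg_one (h y))
    have hinner : Continuous fun y => ((u y / v y : Circle) : ℂ) :=
      continuous_subtype_val.comp (hu.div' hv)
    exact ContinuousAt.comp (x := y) (f := fun y => ((u y / v y : Circle) : ℂ))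
      (g := Complex.arg) (Complex.continuousAt_arg hmem) hinner.continuousAt
  · intro y
    rw [Circle.exp_add, hgv y, Circle.exp_arg]
    simp [div_eq_mul_inv, mul_comm, mul_assoc, mul_left_comm]



/-- Two continuous real lifts of the same circle-valued map differ by a constant
on a preconnected space. -/
lemma sub_const_of_exp_eq {Y : Type*} [TopologicalSpace Y] [PreconnectedSpace Y]
    {g h : Y → ℝ} (hg : Continuous g) (hh : Continuous h)
    (he : ∀ y, Circle.exp (g y) = Circle.exp (h y)) (y₀ y : Y) :
    g y - h y = g y₀ - h y₀ := by
  set d : Y → ℝ := fun y => g y - h y with hd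
  have hdc : Continuous d := hg.sub hh
  have hint : ∀ z, ∃ m : ℤ, d z = m * (2 * Real.pi) := by
    intro z
    obtain ⟨m, hm⟩ := Circle.exp_eq_exp.mp (he z)
    exact ⟨m, by simp only [hd]; linarith⟩
  have hclopen : IsClopen {z | d z = d y₀} := by
    constructor
    · exact isClosed_eq hdc continuous_const
    · rw [isOpen_iff_mem_nhds]
      intro z hz
      have hball : d ⁻¹' Metric.ball (d z) (2 * Real.pi) ∈ nhds z :=
        hdc.continuousAt.preimage_mem_nhds (Metric.ball_mem_nhds _ (by positivity))
      refine Filter.mem_of_superset hball ?_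
      intro w hw
      obtain ⟨m, hm⟩ := hint w
      obtain ⟨m', hm'⟩ := hint z
      have hlt : |d w - d z| < 2 * Real.pi := by
        simpa [Real.dist_eq] using hw
      have : |(m : ℝ) - m'| * (2 * Real.pi) < 2 * Real.pi := by
        rw [hm, hm'] at hlt
        calc |(m : ℝ) - m'| * (2 * Real.pi) = |((m : ℝ) - m') * (2 * Real.pi)| := by
              rw [abs_mul, abs_of_pos (by positivity : (0:ℝ) < 2 * Real.pi)]
          _ = |(m : ℝ) * (2 * Real.pi) - m' * (2 * Real.pi)| := by ring_nf
          _ < 2 * Real.pi := hlt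
      have hmm : |(m : ℝ) - m'| < 1 := by
        by_contra hcon
        push_neg at hcon
        nlinarith [Real.pi_pos]
      have : m = m' := by
        have : |m - m'| < 1 := by
          have := hmm
          rw [show ((m : ℝ) - m') = ((m - m' : ℤ) : ℝ) by push_cast; ring] at this
          exact_mod_cast this
        have h0 : m - m' = 0 := Int.abs_lt_one_iff.mp this
        omega
      have : d w = d z := by rw [hm, hm', this]
      simp only [mem_setOf_eq] at hz ⊢
      rw [this, hz]
  have := (isClopen_iff.mp hclopen).resolve_left (Nonempty.ne_empty ⟨y₀, rfl⟩)
  have hy : y ∈ {z | d z = d y₀} := this ▸ mem_univ y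
  exact hy



/-- Lifting on a compact metric space admitting a "contraction" to a point. -/
lemma lift_of_contraction {Y : Type*} [MetricSpace Y] [CompactSpace Y]
    (S : unitInterval → Y → Y) (hS : Continuous fun p : unitInterval × Y => S p.1 p.2)
    (y₀ : Y) (hS0 : ∀ y, S 0 y = y₀) (hS1 : ∀ y, S 1 y = y)
    {f : Y → Circle} (hf : Continuous f) :
    ∃ g : Y → ℝ, Continuous g ∧ ∀ y, Circle.exp (g y) = f y := by
  set H : unitInterval × Y → Circle := fun p => f (S p.1 p.2) with hH
  have hHc : Continuous H := hf.comp hS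
  have hUC : UniformContinuous H := CompactSpace.uniformContinuous_of_continuous hHc
  obtain ⟨δ, hδ0, hδ⟩ := Metric.uniformContinuous_iff.mp hUC 1 one_pos
  obtain ⟨n, hn0, hn⟩ : ∃ n : ℕ, 0 < n ∧ (1 : ℝ) / n < δ := by
    obtain ⟨n, hn⟩ := exists_nat_one_div_lt hδ0
    exact ⟨n + 1, Nat.succ_pos n, by exact_mod_cast hn⟩
  have hnR : (0 : ℝ) < n := by exact_mod_cast hn0
  set t : ℕ → unitInterval := fun k => Set.projIcc 0 1 zero_le_one ((k : ℝ) / n) with ht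
  have htcoe : ∀ k : ℕ, k ≤ n → ((t k : ℝ)) = (k : ℝ) / n := by
    intro k hk
    have hmem : (k : ℝ) / n ∈ Icc (0 : ℝ) 1 := by
      constructor
      · positivity
      · rw [div_le_one hnR]; exact_mod_cast hk
    rw [ht]
    simp only [Set.projIcc_of_mem zero_le_one hmem]
  have key : ∀ k : ℕ, k ≤ n →
      ∃ g : Y → ℝ, Continuous g ∧ ∀ y, Circle.exp (g y) = H (t k, y) := by
    intro k
    induction k with
    | zero =>
      intro _
      refine ⟨fun _ => Complex.arg (f y₀), continuous_const, fun y => ?_⟩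
      have ht0 : t 0 = 0 := by
        apply Subtype.ext
        rw [htcoe 0 (Nat.zero_le n)]
        simp
      rw [ht0, hH]
      simp only [hS0]
      exact Circle.exp_arg (f y₀)
    | succ k ih =>
      intro hk1
      obtain ⟨g, hgc, hge⟩ := ih (Nat.le_of_succ_le hk1)
      have hdist : ∀ y : Y, dist (H (t (k+1), y)) (H (t k, y)) < 1 := by
        intro y
        apply hδ
        rw [Prod.dist_eq]
        simp only [dist_self]
        rw [max_eq_left dist_nonneg, Subtype.dist_eq,
          htcoe (k+1) hk1, htcoe k (Nat.le_of_succ_le hk1), Real.dist_eq]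
        have heq : ((k : ℝ) + 1) / n - (k : ℝ) / n = 1 / n := by field_simp; ring
        push_cast
        rw [heq, abs_of_pos (by positivity)]
        exact hn
      have hne : ∀ y, ((H (t (k+1), y) : Circle) : ℂ) ≠ -((H (t k, y) : Circle) : ℂ) := by
        intro y hcon
        have h2 : dist (H (t (k+1), y)) (H (t k, y)) = 2 := by
          rw [show dist (H (t (k+1), y)) (H (t k, y)) = dist ((H (t (k+1), y) : Circle) : ℂ) ((H (t k, y) : Circle) : ℂ) from rfl, hcon, Complex.dist_eq]
          have : -((H (t k, y) : Circle) : ℂ) - ((H (t k, y) : Circle) : ℂ)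
              = -(2 * ((H (t k, y) : Circle) : ℂ)) := by ring
          rw [this, norm_neg, norm_mul]
          simp [Circle.norm_coe]
        have := hdist y
        rw [h2] at this
        norm_num at this
      exact step_lift (hHc.comp (Continuous.prodMk_right _)) (hHc.comp (Continuous.prodMk_right _))
        hne hgc hge
  obtain ⟨g, hgc, hge⟩ := key n (le_refl n)
  refine ⟨g, hgc, fun y => ?_⟩
  have htn : t n = 1 := by
    apply Subtype.ext
    rw [htcoe n (le_refl n)]
    field_simp
    simp
  rw [hge y, htn, hH]
  simp only [hS1]



lemma scale_cont : Continuous fun p : unitInterval × unitInterval =>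
    Set.projIcc (0:ℝ) 1 zero_le_one ((p.1 : ℝ) * (p.2 : ℝ)) :=
  continuous_projIcc.comp ((continuous_subtype_val.comp continuous_fst).mul
    (continuous_subtype_val.comp continuous_snd))

lemma scale_zero (y : unitInterval) :
    Set.projIcc (0:ℝ) 1 zero_le_one (((0 : unitInterval) : ℝ) * (y : ℝ)) = 0 := by
  apply Subtype.ext
  simp [Set.projIcc]

lemma scale_one (y : unitInterval) :
    Set.projIcc (0:ℝ) 1 zero_le_one (((1 : unitInterval) : ℝ) * (y : ℝ)) = y := by
  apply Subtype.ext
  rw [show ((1 : unitInterval) : ℝ) * (y : ℝ) = (y : ℝ) by simp]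
  rw [Set.projIcc_of_mem zero_le_one y.2]

lemma interval_lift {f : unitInterval → Circle} (hf : Continuous f) :
    ∃ g : unitInterval → ℝ, Continuous g ∧ ∀ y, Circle.exp (g y) = f y := by
  apply lift_of_contraction
    (fun s y => Set.projIcc (0:ℝ) 1 zero_le_one ((s : ℝ) * (y : ℝ))) scale_cont 0
    scale_zero scale_one hf

lemma square_lift {f : unitInterval × unitInterval → Circle} (hf : Continuous f) :
    ∃ g : unitInterval × unitInterval → ℝ, Continuous g ∧ ∀ y, Circle.exp (g y) = f y := by
  apply lift_of_contraction
    (fun s y => (Set.projIcc (0:ℝ) 1 zero_le_one ((s : ℝ) * (y.1 : ℝ)),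
                 Set.projIcc (0:ℝ) 1 zero_le_one ((s : ℝ) * (y.2 : ℝ))))
    ?_ (0, 0) ?_ ?_ hf
  · apply Continuous.prodMk
    · exact continuous_projIcc.comp ((continuous_subtype_val.comp continuous_fst).mul
        (continuous_subtype_val.comp (continuous_fst.comp continuous_snd)))
    · exact continuous_projIcc.comp ((continuous_subtype_val.comp continuous_fst).mul
        (continuous_subtype_val.comp (continuous_snd.comp continuous_snd)))
  · intro y
    rw [Prod.ext_iff]
    exact ⟨scale_zero y.1, scale_zero y.2⟩
  · intro y
    rw [Prod.ext_iff]
    exact ⟨scale_one y.1, scale_one y.2⟩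



open scoped Classical in
/-- The winding increment of `f` along a path `γ`. -/
noncomputable def inc (f : X → Circle) {a b : X} (γ : Path a b) : ℝ :=
  if h : ∃ g : unitInterval → ℝ, Continuous g ∧ ∀ t, Circle.exp (g t) = f (γ t)
  then h.choose 1 - h.choose 0 else 0

lemma inc_eq {f : X → Circle} {a b : X} (γ : Path a b) {g : unitInterval → ℝ}
    (hg : Continuous g) (hge : ∀ t, Circle.exp (g t) = f (γ t)) :
    inc f γ = g 1 - g 0 := by
  have h : ∃ g : unitInterval → ℝ, Continuous g ∧ ∀ t, Circle.exp (g t) = f (γ t) := ⟨g, hg, hge⟩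
  rw [inc]
  rw [dif_pos h]
  obtain ⟨hc, he⟩ := h.choose_spec
  have := sub_const_of_exp_eq hc hg (fun t => by rw [he t, hge t]) 0 1
  linarith

lemma exp_inc {f : X → Circle} (hf : Continuous f) {a b : X} (γ : Path a b) :
    Circle.exp (inc f γ) * f a = f b := by
  obtain ⟨g, hg, hge⟩ := interval_lift (f := fun t => f (γ t)) (hf.comp γ.continuous)
  rw [inc_eq γ hg hge]
  have h0 : Circle.exp (g 0) = f a := by simpa using hge 0
  have h1 : Circle.exp (g 1) = f b := by simpa using hge 1
  rw [← h0, ← h1, ← Circle.exp_add]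
  ring_nf

lemma inc_homotopic {f : X → Circle} (hf : Continuous f) {a b : X} (γ₁ γ₂ : Path a b)
    (h : γ₁.Homotopic γ₂) : inc f γ₁ = inc f γ₂ := by
  obtain ⟨H⟩ := h
  obtain ⟨G, hGc, hGe⟩ := square_lift (f := fun p => f (H p)) (hf.comp H.continuous)
  have hG1 : ∀ s, G (s, 1) = G (0, 1) := by
    intro s
    have := sub_const_of_exp_eq (g := fun s : unitInterval => G (s, 1))
      (h := fun _ => G (0, 1))
      (hGc.comp (continuous_id.prodMk continuous_const)) continuous_const
      (fun s => by
        rw [hGe (s, 1), hGe (0, 1)]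
        congr 1
        rw [H.eq_snd s (by norm_num), H.eq_snd 0 (by norm_num)]) 0 s
    simp only [sub_self] at this
    linarith
  have hG0 : ∀ s, G (s, 0) = G (0, 0) := by
    intro s
    have := sub_const_of_exp_eq (g := fun s : unitInterval => G (s, 0))
      (h := fun _ => G (0, 0))
      (hGc.comp (continuous_id.prodMk continuous_const)) continuous_const
      (fun s => by
        rw [hGe (s, 0), hGe (0, 0)]
        congr 1
        rw [H.eq_snd s (by norm_num), H.eq_snd 0 (by norm_num)]) 0 s
    simp only [sub_self] at this
    linarith
  have h1 : inc f γ₁ = G (0, 1) - G (0, 0) := by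
    apply inc_eq (g := fun t => G (0, t)) γ₁ ?_ ?_
    · exact hGc.comp (continuous_const.prodMk continuous_id)
    · intro t
      rw [hGe (0, t)]
      congr 1
      exact H.apply_zero t
  have h2 : inc f γ₂ = G (1, 1) - G (1, 0) := by
    apply inc_eq (g := fun t => G (1, t)) γ₂ ?_ ?_
    · exact hGc.comp (continuous_const.prodMk continuous_id)
    · intro t
      rw [hGe (1, t)]
      congr 1
      exact H.apply_one t
  rw [h1, h2, hG1 1, hG0 1]

lemma exp_two_pi_int (m : ℤ) : Circle.exp ((m : ℝ) * (2 * Real.pi)) = 1 := by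
  have : Circle.exp ((m : ℝ) * (2 * Real.pi)) = Circle.exp 0 := by
    apply Circle.exp_eq_exp.mpr
    exact ⟨m, by ring⟩
  rw [this, Circle.exp_zero]

lemma inc_trans {f : X → Circle} (hf : Continuous f) {a b c : X}
    (γ : Path a b) (δ : Path b c) :
    inc f (γ.trans δ) = inc f γ + inc f δ := by
  obtain ⟨g₁, hg₁c, hg₁e⟩ := interval_lift (f := fun t => f (γ t)) (hf.comp γ.continuous)
  obtain ⟨g₂, hg₂c, hg₂e⟩ := interval_lift (f := fun t => f (δ t)) (hf.comp δ.continuous)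
  set c₀ : ℝ := g₁ 1 - g₂ 0 with hc₀
  have hexpc₀ : Circle.exp c₀ = 1 := by
    obtain ⟨m, hm⟩ := Circle.exp_eq_exp.mp (show Circle.exp (g₁ 1) = Circle.exp (g₂ 0) by
      rw [hg₁e 1, hg₂e 0]
      simp)
    have : c₀ = (m : ℝ) * (2 * Real.pi) := by rw [hc₀]; linarith
    rw [this]
    exact exp_two_pi_int m
  classical
  set G : unitInterval → ℝ := fun t =>
    if (t : ℝ) ≤ 1 / 2 then g₁ (Set.projIcc 0 1 zero_le_one (2 * (t : ℝ)))
    else g₂ (Set.projIcc 0 1 zero_le_one (2 * (t : ℝ) - 1)) + c₀ with hG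
  have hGc : Continuous G := by
    apply Continuous.if_le
    · exact hg₁c.comp (continuous_projIcc.comp (by continuity))
    · exact (hg₂c.comp (continuous_projIcc.comp (by continuity))).add continuous_const
    · exact continuous_subtype_val
    · exact continuous_const
    · intro t htm
      have h1 : 2 * (t : ℝ) = 1 := by linarith
      have h2 : 2 * (t : ℝ) - 1 = 0 := by linarith
      rw [h2, h1]
      rw [show Set.projIcc (0:ℝ) 1 zero_le_one 1 = 1 from Subtype.ext (by
        rw [Set.projIcc_of_mem zero_le_one (by norm_num : (1:ℝ) ∈ Icc (0:ℝ) 1)]; rfl)]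
      rw [show Set.projIcc (0:ℝ) 1 zero_le_one 0 = 0 from Subtype.ext (by
        rw [Set.projIcc_of_mem zero_le_one (by norm_num : (0:ℝ) ∈ Icc (0:ℝ) 1)]; rfl)]
      rw [hc₀]
      ring
  have hGe : ∀ t, Circle.exp (G t) = f ((γ.trans δ) t) := by
    intro t
    rw [Path.trans_apply]
    by_cases h : (t : ℝ) ≤ 1 / 2
    · rw [dif_pos h, hG]
      simp only [if_pos h]
      have hmem : 2 * (t : ℝ) ∈ Icc (0:ℝ) 1 := ⟨by have := t.2.1; linarith, by linarith⟩
      rw [Set.projIcc_of_mem zero_le_one hmem]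
      exact hg₁e _
    · rw [dif_neg h, hG]
      simp only [if_neg h]
      push_neg at h
      have hmem : 2 * (t : ℝ) - 1 ∈ Icc (0:ℝ) 1 := ⟨by linarith, by nlinarith [t.2.2]⟩
      rw [Set.projIcc_of_mem zero_le_one hmem, Circle.exp_add, hexpc₀, mul_one]
      exact hg₂e _
  have := inc_eq (γ.trans δ) hGc hGe
  rw [this]
  have hG1 : G 1 = g₂ 1 + c₀ := by
    rw [hG]
    simp only
    rw [if_neg (by norm_num)]
    congr 2
    apply Subtype.ext
    rw [Set.projIcc_of_mem zero_le_one (by norm_num : 2 * ((1 : unitInterval) : ℝ) - 1 ∈ Icc (0:ℝ) 1)]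
    norm_num
  have hG0 : G 0 = g₁ 0 := by
    rw [hG]
    simp only
    rw [if_pos (by norm_num)]
    congr 1
    apply Subtype.ext
    rw [Set.projIcc_of_mem zero_le_one (by norm_num : 2 * ((0 : unitInterval) : ℝ) ∈ Icc (0:ℝ) 1)]
    norm_num
  rw [hG1, hG0, inc_eq γ hg₁c hg₁e, inc_eq δ hg₂c hg₂e, hc₀]
  ring

lemma inc_eq_arg {f : X → Circle} (hf : Continuous f) {a b : X} (δ : Path a b)
    (h : ∀ t, ((f (δ t)) : ℂ) ≠ -((f a : Circle) : ℂ)) :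
    inc f δ = Complex.arg ((f b / f a : Circle) : ℂ) := by
  have harg : ∀ t, Circle.exp (Complex.arg ((f (δ t) / f a : Circle) : ℂ) + Complex.arg (f a))
      = f (δ t) := by
    intro t
    rw [Circle.exp_add, Circle.exp_arg, Circle.exp_arg]
    simp [div_eq_mul_inv, mul_comm, mul_assoc, mul_left_comm]
  have hcont : Continuous fun t => Complex.arg ((f (δ t) / f a : Circle) : ℂ)
      + Complex.arg ((f a : Circle) : ℂ) := by
    apply Continuous.add _ continuous_const
    rw [continuous_iff_continuousAt]
    intro t
    have hmem : ((f (δ t) / f a : Circle) : ℂ) ∈ Complex.slitPlane :=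
      mem_slitPlane_of_ne_neg_one (div_ne_neg_one (h t))
    have hinner : Continuous fun t : unitInterval => ((f (δ t) / f a : Circle) : ℂ) :=
      continuous_subtype_val.comp (((hf.comp δ.continuous)).div' continuous_const)
    exact ContinuousAt.comp (x := t) (f := fun t : unitInterval => ((f (δ t) / f a : Circle) : ℂ))
      (g := Complex.arg) (Complex.continuousAt_arg hmem) hinner.continuousAt
  rw [inc_eq δ hcont harg]
  simp only [Path.target, Path.source]
  rw [show (f a / f a : Circle) = 1 from div_self' (f a)]
  simp



variable {X : Type*} [TopologicalSpace X]

/-- **Lifting criterion**: on a simply connected, locally path-connected space, every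
continuous circle-valued map has a continuous real lift. -/
lemma exists_global_lift {X : Type*} [TopologicalSpace X] [SimplyConnectedSpace X]
    [LocallyPathConnectedSpace X] {f : X → Circle} (hf : Continuous f) :
    ∃ F : X → ℝ, Continuous F ∧ ∀ x, Circle.exp (F x) = f x := by
  have hne : Nonempty X := (inferInstance : PathConnectedSpace X).nonempty
  obtain ⟨x₀⟩ := hne
  set F : X → ℝ := fun x =>
    Complex.arg ((f x₀ : Circle) : ℂ) + inc f (PathConnectedSpace.somePath x₀ x) with hF
  have hFe : ∀ x, Circle.exp (F x) = f x := by
    intro x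
    rw [hF]
    simp only
    rw [Circle.exp_add, Circle.exp_arg, mul_comm]
    exact exp_inc hf _
  refine ⟨F, ?_, hFe⟩
  rw [continuous_iff_continuousAt]
  intro x
  -- choose a path-connected neighbourhood on which `f` avoids the antipode of `f x`
  have hopen : IsOpen {z | (f z : ℂ) ≠ -((f x : Circle) : ℂ)} := by
    have : {z | (f z : ℂ) ≠ -((f x : Circle) : ℂ)}
        = (fun z => ((f z : Circle) : ℂ)) ⁻¹' ({-((f x : Circle) : ℂ)}ᶜ) := rfl
    rw [this]
    exact (isOpen_compl_singleton).preimage (continuous_subtype_val.comp hf)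
  have hxmem : x ∈ {z | (f z : ℂ) ≠ -((f x : Circle) : ℂ)} := circle_ne_neg_self (f x)
  obtain ⟨U, ⟨hUn, hUpc⟩, hUsub⟩ := (path_connected_basis x).mem_iff.mp
    (hopen.mem_nhds hxmem)
  have hxU : x ∈ U := mem_of_mem_nhds hUn
  -- locally, `F y = F x + arg (f y / f x)`
  have hlocal : ∀ y ∈ U, F y = F x + Complex.arg ((f y / f x : Circle) : ℂ) := by
    intro y hy
    have hjoin : JoinedIn U x y := hUpc.joinedIn x hxU y hy
    set δ : Path x y := hjoin.somePath with hδ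
    have hδmem : ∀ t, δ t ∈ U := hjoin.somePath_mem
    have hhom : (PathConnectedSpace.somePath x₀ y).Homotopic
        ((PathConnectedSpace.somePath x₀ x).trans δ) :=
      SimplyConnectedSpace.paths_homotopic _ _
    have h1 : inc f (PathConnectedSpace.somePath x₀ y)
        = inc f (PathConnectedSpace.somePath x₀ x) + inc f δ := by
      rw [inc_homotopic hf _ _ hhom, inc_trans hf]
    have h2 : inc f δ = Complex.arg ((f y / f x : Circle) : ℂ) := by
      apply inc_eq_arg hf
      intro t
      exact hUsub (hδmem t)
    rw [hF]
    simp only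
    rw [h1, h2]
    ring
  -- conclude continuity at `x`
  have hcongr : F =ᶠ[nhds x] fun y => F x + Complex.arg ((f y / f x : Circle) : ℂ) := by
    filter_upwards [hUn] with y hy
    exact hlocal y hy
  have hG : ContinuousAt (fun y => F x + Complex.arg ((f y / f x : Circle) : ℂ)) x := by
    apply ContinuousAt.add continuousAt_const
    have hinner : Continuous fun y : X => ((f y / f x : Circle) : ℂ) :=
      continuous_subtype_val.comp (hf.div' continuous_const)
    have hmem : ((f x / f x : Circle) : ℂ) ∈ Complex.slitPlane := by
      rw [show (f x / f x : Circle) = 1 from div_self' (f x)]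
      simp [Complex.mem_slitPlane_iff]
    exact ContinuousAt.comp (x := x) (f := fun y : X => ((f y / f x : Circle) : ℂ))
      (g := Complex.arg) (Complex.continuousAt_arg hmem) hinner.continuousAt
  exact hG.congr hcongr.symm


end TwoCellAux
end



open TwoCellAux in
/-- The `q = 2` case of the boundary-connectedness theorem: if `X`
is a connected, simply connected, locally path-connected metric space, and `Ω₁, Ω₂`
are disjoint non-empty open connected sets with `closure Ω₁ ∪ closure Ω₂ = X` and
`Ω_i = interior (closure Ω_i)`, then `Σ = ∂Ω₁ = ∂Ω₂` is connected. -/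
theorem two_cell_partition_boundary_connected
    {X : Type*} [MetricSpace X] [ConnectedSpace X] [SimplyConnectedSpace X]
    [LocallyPathConnectedSpace X]
    (Ω₁ Ω₂ : Set X) (hd : Disjoint Ω₁ Ω₂)
    (hne₁ : Ω₁.Nonempty) (hne₂ : Ω₂.Nonempty)
    (ho₁ : IsOpen Ω₁) (ho₂ : IsOpen Ω₂)
    (hc₁ : IsConnected Ω₁) (hc₂ : IsConnected Ω₂)
    (hreg₁ : Ω₁ = interior (closure Ω₁)) (hreg₂ : Ω₂ = interior (closure Ω₂))
    (hcover : closure Ω₁ ∪ closure Ω₂ = univ) :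
    frontier Ω₁ = frontier Ω₂ ∧ IsConnected (frontier Ω₁) := by
  classical
  -- Ω₂ is the complement of the closure of Ω₁, and vice versa
  have hΩ₂c : Ω₂ = (closure Ω₁)ᶜ := by
    apply Subset.antisymm
    · intro x hx
      intro hc
      have h1 : closure Ω₁ ⊆ Ω₂ᶜ :=
        closure_minimal (fun y hy hy2 => hd.ne_of_mem hy hy2 rfl) ho₂.isClosed_compl
      exact h1 hc hx
    · intro x hx
      have h2 : x ∈ closure Ω₂ := by
        rcases (hcover ▸ mem_univ x : x ∈ closure Ω₁ ∪ closure Ω₂) with h | h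
        · exact absurd h hx
        · exact h
      have h3 : (closure Ω₁)ᶜ ⊆ interior (closure Ω₂) :=
        interior_maximal (fun y hy => by
          rcases (hcover ▸ mem_univ y : y ∈ closure Ω₁ ∪ closure Ω₂) with h | h
          · exact absurd h hy
          · exact h) isClosed_closure.isOpen_compl
      rw [hreg₂]
      exact h3 hx
  have hΩ₁c : Ω₁ = (closure Ω₂)ᶜ := by
    apply Subset.antisymm
    · intro x hx hc
      have h1 : closure Ω₂ ⊆ Ω₁ᶜ :=
        closure_minimal (fun y hy hy2 => hd.ne_of_mem hy2 hy rfl) ho₁.isClosed_compl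
      exact h1 hc hx
    · intro x hx
      have h3 : (closure Ω₂)ᶜ ⊆ interior (closure Ω₁) :=
        interior_maximal (fun y hy => by
          rcases (hcover ▸ mem_univ y : y ∈ closure Ω₁ ∪ closure Ω₂) with h | h
          · exact h
          · exact absurd h hy) isClosed_closure.isOpen_compl
      rw [hreg₁]
      exact h3 hx
  -- the common frontier
  have hfr₁ : frontier Ω₁ = closure Ω₁ ∩ closure Ω₂ := by
    rw [frontier, ho₁.interior_eq, hΩ₁c]
    rw [diff_compl]  -- closure Ω₁ \ (closure Ω₂)ᶜ = closure Ω₁ ∩ closure Ω₂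
  have hfr₂ : frontier Ω₂ = closure Ω₂ ∩ closure Ω₁ := by
    rw [frontier, ho₂.interior_eq, hΩ₂c, diff_compl]
  have hfr : frontier Ω₁ = frontier Ω₂ := by rw [hfr₁, hfr₂, inter_comm]
  refine ⟨hfr, ?_, ?_⟩
  -- nonemptiness of the frontier
  · by_contra hempty
    rw [not_nonempty_iff_eq_empty, hfr₁] at hempty
    have hclopen : IsClopen (closure Ω₁) := by
      constructor
      · exact isClosed_closure
      · have : closure Ω₁ = (closure Ω₂)ᶜ := by
          apply Subset.antisymm
          · intro x hx hc
            exact absurd (mem_inter hx hc) (by rw [hempty]; exact notMem_empty x)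
          · intro x hx
            rcases (hcover ▸ mem_univ x : x ∈ closure Ω₁ ∪ closure Ω₂) with h | h
            · exact h
            · exact absurd h hx
        rw [this]
        exact isClosed_closure.isOpen_compl
    rcases isClopen_iff.mp hclopen with h | h
    · exact absurd h (Nonempty.ne_empty (hne₁.mono subset_closure))
    · apply hne₂.ne_empty
      rw [hΩ₂c, h, compl_univ]
  -- preconnectedness of the frontier
  · by_contra hnc
    rw [IsPreconnected] at hnc
    push_neg at hnc
    obtain ⟨u, v, hu, hv, hcov, hnu, hnv, hdis⟩ := hnc
    set Sig : Set X := frontier Ω₁ with hSig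
    have hSigclosed : IsClosed Sig := isClosed_frontier
    set P : Set X := Sig ∩ vᶜ with hP
    set Q : Set X := Sig ∩ uᶜ with hQ
    have hPclosed : IsClosed P := hSigclosed.inter hv.isClosed_compl
    have hQclosed : IsClosed Q := hSigclosed.inter hu.isClosed_compl
    have hPQdisj : Disjoint P Q := by
      rw [disjoint_iff_inter_eq_empty]
      ext x
      simp only [hP, hQ, mem_inter_iff, mem_compl_iff, mem_empty_iff_false, iff_false]
      rintro ⟨⟨hx1, hx2⟩, _, hx4⟩
      rcases hcov hx1 with h | h
      · exact hx4 h
      · exact hx2 h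
    have hPQunion : P ∪ Q = Sig := by
      ext x
      simp only [hP, hQ, mem_union, mem_inter_iff, mem_compl_iff]
      constructor
      · rintro (⟨h1, _⟩ | ⟨h1, _⟩) <;> exact h1
      · intro hx
        by_cases hxu : x ∈ u
        · left
          refine ⟨hx, fun hxv => ?_⟩
          have : x ∈ Sig ∩ (u ∩ v) := ⟨hx, hxu, hxv⟩
          rw [hdis] at this
          exact this
        · right
          exact ⟨hx, hxu⟩
    have hPne : P.Nonempty := by
      obtain ⟨x, hx1, hx2⟩ := hnu
      refine ⟨x, hx1, fun hxv => ?_⟩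
      have : x ∈ Sig ∩ (u ∩ v) := ⟨hx1, hx2, hxv⟩
      rw [hdis] at this
      exact this
    have hQne : Q.Nonempty := by
      obtain ⟨x, hx1, hx2⟩ := hnv
      refine ⟨x, hx1, fun hxu => ?_⟩
      have : x ∈ Sig ∩ (u ∩ v) := ⟨hx1, hxu, hx2⟩
      rw [hdis] at this
      exact this
    -- Urysohn function separating P and Q
    obtain ⟨φ, hφP, hφQ, hφrange⟩ :=
      exists_continuous_zero_one_of_isClosed hPclosed hQclosed hPQdisj
    -- the circle-valued map
    set fc : X → Circle := fun x =>
      if x ∈ closure Ω₁ then Circle.exp (Real.pi * φ x)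
      else Circle.exp (-(Real.pi * φ x)) with hfc
    have hSigval : ∀ x ∈ Sig, Circle.exp (Real.pi * φ x) = Circle.exp (-(Real.pi * φ x)) := by
      intro x hx
      rcases (hPQunion ▸ hx : x ∈ P ∪ Q) with h | h
      · rw [hφP h]
        norm_num
      · rw [hφQ h]
        simp only [Pi.one_apply, mul_one]
        apply Circle.exp_eq_exp.mpr
        exact ⟨1, by push_cast; ring⟩
    have hfccont : Continuous fc := by
      apply Continuous.if
      · intro a ha
        have h1 : frontier {x | x ∈ closure Ω₁} ⊆ Sig := by
          rw [hSig]
          have : frontier {x | x ∈ closure Ω₁} = frontier (closure Ω₁) := rfl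
          rw [this]
          intro z hz
          rw [frontier, isClosed_closure.closure_eq] at hz
          rw [frontier, ho₁.interior_eq]
          exact ⟨hz.1, fun hzi => hz.2 ((hreg₁ ▸ hzi : z ∈ interior (closure Ω₁)))⟩
        exact hSigval a (h1 ha)
      · exact Circle.exp.continuous.comp (continuous_const.mul φ.continuous)
      · exact Circle.exp.continuous.comp (continuous_const.mul φ.continuous).neg
    -- lift it
    obtain ⟨F, hFc, hFe⟩ := exists_global_lift hfccont
    -- pick points of P and Q
    obtain ⟨p, hp⟩ := hPne
    obtain ⟨q, hq⟩ := hQne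
    have hpSig : p ∈ Sig := hp.1
    have hqSig : q ∈ Sig := hq.1
    have hSigsub₁ : Sig ⊆ closure Ω₁ := by rw [hfr₁]; exact inter_subset_left
    have hSigsub₂ : Sig ⊆ closure Ω₂ := by rw [hfr₁]; exact inter_subset_right
    -- constancy on closure Ω₁
    have hcl₁ : IsPreconnected (closure Ω₁) := hc₁.isPreconnected.closure
    have hcl₂ : IsPreconnected (closure Ω₂) := hc₂.isPreconnected.closure
    haveI := Subtype.preconnectedSpace hcl₁
    haveI := Subtype.preconnectedSpace hcl₂
    have hA := sub_const_of_exp_eq (Y := closure Ω₁)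
      (g := fun y => Real.pi * φ y.1) (h := fun y => F y.1)
      (continuous_const.mul (φ.continuous.comp continuous_subtype_val))
      (hFc.comp continuous_subtype_val)
      (fun y => by
        rw [hFe y.1, hfc]
        simp only [if_pos y.2])
      ⟨p, hSigsub₁ hpSig⟩ ⟨q, hSigsub₁ hqSig⟩
    have hB := sub_const_of_exp_eq (Y := closure Ω₂)
      (g := fun y => -(Real.pi * φ y.1)) (h := fun y => F y.1)
      ((continuous_const.mul (φ.continuous.comp continuous_subtype_val)).neg)
      (hFc.comp continuous_subtype_val)
      (fun y => by
        rw [hFe y.1, hfc]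
        by_cases hy : y.1 ∈ closure Ω₁
        · simp only [if_pos hy]
          exact (hSigval y.1 (by rw [hfr₁]; exact ⟨hy, y.2⟩)).symm
        · simp only [if_neg hy])
      ⟨p, hSigsub₂ hpSig⟩ ⟨q, hSigsub₂ hqSig⟩
    simp only at hA hB
    rw [hφP hp, hφQ hq] at hA hB
    simp only [Pi.zero_apply, Pi.one_apply, mul_zero, mul_one, neg_zero] at hA hB
    -- hA : π - F q = 0 - F p ;  hB : -π - F q = 0 - F p
    have : Real.pi = -Real.pi := by linarith
    have := Real.pi_pos
    linarith
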